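/- For a star-shaped domain D in R^3 with star center a, and any continuously differentiable divergence-free vector field u on the closure of D, the Poincaré lifting R_a(u)(x) := (∫_0^1 t·u(a + t(x-a)) dt) × (x - a) satisfies curl(R_a(u)) = u on D. -/

import Mathlib

open MeasureTheory

/-- Partial derivative of a scalar function on ℝ³. -/
noncomputable def pd3 (f : (Fin 3 → ℝ) → ℝ) (i : Fin 3) (x : Fin 3 → ℝ) : ℝ :=
  fderiv ℝ f x (Pi.single i 1)

/-- Curl of a vector field on ℝ³. -/
noncomputable def curl3 (u : (Fin 3 → ℝ) → (Fin 3 → ℝ)) (x : Fin 3 → ℝ) : Fin 3 → ℝ :=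
  ![pd3 (fun y => u y 2) 1 x - pd3 (fun y => u y 1) 2 x,
    pd3 (fun y => u y 0) 2 x - pd3 (fun y => u y 2) 0 x,
    pd3 (fun y => u y 1) 0 x - pd3 (fun y => u y 0) 1 x]

/-- Divergence of a vector field on ℝ³. -/
noncomputable def div3 (u : (Fin 3 → ℝ) → (Fin 3 → ℝ)) (x : Fin 3 → ℝ) : ℝ :=
  ∑ i, pd3 (fun y => u y i) i x

/-- Gradient of a scalar field on ℝ³. -/
noncomputable def grad3 (f : (Fin 3 → ℝ) → ℝ) (x : Fin 3 → ℝ) : Fin 3 → ℝ :=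
  fun i => pd3 f i x

/-- Cross product in ℝ³. -/
def cross3 (a b : Fin 3 → ℝ) : Fin 3 → ℝ :=
  ![a 1 * b 2 - a 2 * b 1, a 2 * b 0 - a 0 * b 2, a 0 * b 1 - a 1 * b 0]

/-- Euclidean dot product in ℝ³. -/
def dot3 (a b : Fin 3 → ℝ) : ℝ := ∑ i, a i * b i

/-- `f` is (given by) a polynomial of total degree ≤ p. -/
def IsPoly3 (p : ℕ) (f : (Fin 3 → ℝ) → ℝ) : Prop :=
  ∃ q : MvPolynomial (Fin 3) ℝ, q.totalDegree ≤ p ∧ ∀ x, f x = MvPolynomial.eval x q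

/-- Vector field whose components are polynomials of total degree ≤ p. -/
def IsPolyVec3 (p : ℕ) (u : (Fin 3 → ℝ) → (Fin 3 → ℝ)) : Prop :=
  ∀ i, IsPoly3 p (fun x => u x i)

/-- First-family Nédélec space of degree p (as a set of vector fields). -/
def NedelecW1 (p : ℕ) : Set ((Fin 3 → ℝ) → (Fin 3 → ℝ)) :=
  {v | ∃ P Q, IsPolyVec3 p P ∧ IsPolyVec3 p Q ∧ ∀ x, v x = P x + cross3 (Q x) x}

/-- Face-element (second family) space of degree p. -/
def NedelecW2 (p : ℕ) : Set ((Fin 3 → ℝ) → (Fin 3 → ℝ)) :=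
  {v | ∃ P q, IsPolyVec3 p P ∧ IsPoly3 p q ∧ ∀ x, v x = P x + q x • x}

/-- Poincaré lifting with center a. -/
noncomputable def Rlift (a : Fin 3 → ℝ) (u : (Fin 3 → ℝ) → (Fin 3 → ℝ))
    (x : Fin 3 → ℝ) : Fin 3 → ℝ :=
  cross3 (∫ t in (0:ℝ)..1, t • u (a + t • (x - a))) (x - a)

/-- Degree-2 Poincaré lifting with center a. -/
noncomputable def Dlift (a : Fin 3 → ℝ) (u : (Fin 3 → ℝ) → ℝ)
    (x : Fin 3 → ℝ) : Fin 3 → ℝ :=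
  (∫ t in (0:ℝ)..1, t ^ 2 * u (a + t • (x - a))) • (x - a)


set_option maxHeartbeats 2000000 in
/-- For a bounded domain `D ⊂ ℝ³` star-shaped with respect to `a ∈ D`,
and a C¹ divergence-free vector field `u` on the closure of `D`, the Poincaré lifting
satisfies `curl (Rlift a u) = u` on `D`. -/
theorem poincare_lifting_curl (D : Set (Fin 3 → ℝ)) (hD : IsOpen D)
    (hbdd : Bornology.IsBounded D) (a : Fin 3 → ℝ) (ha : a ∈ D)
    (hstar : ∀ x ∈ D, ∀ t ∈ Set.Ioo (0:ℝ) 1, t • a + (1 - t) • x ∈ D)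
    (u : (Fin 3 → ℝ) → (Fin 3 → ℝ)) (hu : ContDiffOn ℝ 1 u (closure D))
    (hdiv : ∀ x ∈ D, div3 u x = 0) :
    ∀ x ∈ D, curl3 (Rlift a u) x = u x := by
  classical
  -- basic differentiability facts about u on the open set D
  have huD : ContDiffOn ℝ 1 u D := hu.mono subset_closure
  have hud : ∀ z ∈ D, HasFDerivAt u (fderiv ℝ u z) z := by
    intro z hz
    exact ((huD.differentiableOn one_ne_zero).differentiableAt (hD.mem_nhds hz)).hasFDerivAt
  have hucont : ContinuousOn u D := huD.continuousOn
  have hf'cont : ContinuousOn (fun z => fderiv ℝ u z) D :=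
    huD.continuousOn_fderiv_of_isOpen hD le_rfl
  -- star-shapedness in the convenient form
  have hseg : ∀ y ∈ D, ∀ t ∈ Set.Icc (0:ℝ) 1, a + t • (y - a) ∈ D := by
    intro y hy t ht
    rcases eq_or_lt_of_le ht.1 with h0 | h0
    · simpa [← h0] using ha
    rcases eq_or_lt_of_le ht.2 with h1 | h1
    · simpa [h1] using hy
    have h := hstar y hy (1 - t) ⟨by linarith, by linarith⟩
    have heq : (1 - t) • a + (1 - (1 - t)) • y = a + t • (y - a) := by
      module
    rwa [heq] at h
  intro x hx
  obtain ⟨ε, hε, hball⟩ : ∃ ε > 0, Metric.closedBall x ε ⊆ D := by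
    rcases Metric.isOpen_iff.1 hD x hx with ⟨δ, hδ, hsub⟩
    exact ⟨δ/2, by linarith, (Metric.closedBall_subset_ball (by linarith)).trans hsub⟩
  have hsegB : ∀ y ∈ Metric.closedBall x ε, ∀ t ∈ Set.Icc (0:ℝ) 1, a + t • (y - a) ∈ D :=
    fun y hy => hseg y (hball hy)
  -- compact bound for the derivative along the cone
  obtain ⟨C, hC⟩ : ∃ C, ∀ z ∈ ((fun p : ℝ × (Fin 3 → ℝ) => a + p.1 • (p.2 - a)) ''
      (Set.Icc (0:ℝ) 1 ×ˢ Metric.closedBall x ε)), ‖fderiv ℝ u z‖ ≤ C := by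
    have hK : IsCompact ((fun p : ℝ × (Fin 3 → ℝ) => a + p.1 • (p.2 - a)) ''
        (Set.Icc (0:ℝ) 1 ×ˢ Metric.closedBall x ε)) :=
      (isCompact_Icc.prod (isCompact_closedBall x ε)).image (by fun_prop)
    have hKD : ((fun p : ℝ × (Fin 3 → ℝ) => a + p.1 • (p.2 - a)) ''
        (Set.Icc (0:ℝ) 1 ×ˢ Metric.closedBall x ε)) ⊆ D := by
      rintro _ ⟨⟨t, y⟩, ⟨ht, hy⟩, rfl⟩
      exact hsegB y hy t ht
    exact hK.exists_bound_of_continuousOn (hf'cont.mono hKD)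
  have hCmem : ∀ t ∈ Set.Icc (0:ℝ) 1, ∀ y ∈ Metric.closedBall x ε,
      ‖fderiv ℝ u (a + t • (y - a))‖ ≤ C := by
    intro t ht y hy
    exact hC _ ⟨(t, y), ⟨ht, hy⟩, rfl⟩
  -- continuity along the ray t ↦ a + t • (y - a)
  have hγ : ∀ y : Fin 3 → ℝ, Continuous fun t : ℝ => a + t • (y - a) := by
    intro y; fun_prop
  have hmaps : ∀ y ∈ Metric.closedBall x ε,
      Set.MapsTo (fun t : ℝ => a + t • (y - a)) (Set.Icc (0:ℝ) 1) D :=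
    fun y hy t ht => hsegB y hy t ht
  have hxball : x ∈ Metric.closedBall x ε := Metric.mem_closedBall_self hε.le
  have hcontu : ∀ y ∈ Metric.closedBall x ε,
      ContinuousOn (fun t : ℝ => u (a + t • (y - a))) (Set.Icc (0:ℝ) 1) :=
    fun y hy => hucont.comp (hγ y).continuousOn (hmaps y hy)
  have hcontf' : ContinuousOn (fun t : ℝ => fderiv ℝ u (a + t • (x - a))) (Set.Icc (0:ℝ) 1) :=
    hf'cont.comp (hγ x).continuousOn (hmaps x hxball)
  have hci : ∀ (f : ℝ → ℝ), ContinuousOn f (Set.Icc (0:ℝ) 1) →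
      IntervalIntegrable f MeasureTheory.volume 0 1 := by
    intro f hf
    exact ContinuousOn.intervalIntegrable (by rwa [Set.uIcc_of_le zero_le_one])
  have hcontui : ∀ i : Fin 3, ContinuousOn (fun t : ℝ => u (a + t • (x - a)) i)
      (Set.Icc (0:ℝ) 1) := by
    intro i
    have h1 := hcontu x hxball
    exact (continuous_apply i).comp_continuousOn h1
  have hcontMij : ∀ (v : Fin 3 → ℝ) (i : Fin 3),
      ContinuousOn (fun t : ℝ => t ^ 2 * (fderiv ℝ u (a + t • (x - a)) v i))
      (Set.Icc (0:ℝ) 1) := by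
    intro v i
    apply ContinuousOn.mul (continuous_pow 2).continuousOn
    have h1 : ContinuousOn (fun t : ℝ => fderiv ℝ u (a + t • (x - a)) v)
        (Set.Icc (0:ℝ) 1) := hcontf'.clm_apply continuousOn_const
    exact (continuous_apply i).comp_continuousOn h1
  set g : (Fin 3 → ℝ) → (Fin 3 → ℝ) :=
    fun y => ∫ t in (0:ℝ)..1, t • u (a + t • (y - a)) with hgdef
  set F' : (Fin 3 → ℝ) → ℝ → ((Fin 3 → ℝ) →L[ℝ] (Fin 3 → ℝ)) :=
    fun y t => t • ((fderiv ℝ u (a + t • (y - a))).comp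
      (t • ContinuousLinearMap.id ℝ (Fin 3 → ℝ))) with hF'def
  have hF'cont : ContinuousOn (F' x) (Set.Icc (0:ℝ) 1) := by
    apply ContinuousOn.smul continuousOn_id
    exact hcontf'.clm_comp ((continuous_id.smul continuous_const).continuousOn)
  have hFcont : ∀ y ∈ Metric.closedBall x ε,
      ContinuousOn (fun t : ℝ => t • u (a + t • (y - a))) (Set.Icc (0:ℝ) 1) :=
    fun y hy => ContinuousOn.smul continuousOn_id (hcontu y hy)
  have hF_int : IntervalIntegrable (fun t : ℝ => t • u (a + t • (x - a)))
      MeasureTheory.volume 0 1 :=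
    ContinuousOn.intervalIntegrable (by rw [Set.uIcc_of_le zero_le_one]; exact hFcont x hxball)
  have hIoc : Set.uIoc (0:ℝ) 1 = Set.Ioc 0 1 := Set.uIoc_of_le zero_le_one
  -- differentiation under the integral sign
  have hG : HasFDerivAt g (∫ t in (0:ℝ)..1, F' x t) x := by
    apply intervalIntegral.hasFDerivAt_integral_of_dominated_of_fderiv_le
      (s := Metric.ball x ε) (hs := Metric.ball_mem_nhds x hε) (bound := fun _ => C)
    · filter_upwards [Metric.closedBall_mem_nhds x hε] with y hy
      rw [hIoc]
      exact (ContinuousOn.aestronglyMeasurable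
        ((hFcont y hy).mono Set.Ioc_subset_Icc_self) measurableSet_Ioc)
    · exact hF_int
    · rw [hIoc]
      exact (ContinuousOn.aestronglyMeasurable
        (hF'cont.mono Set.Ioc_subset_Icc_self) measurableSet_Ioc)
    · refine Filter.Eventually.of_forall ?_
      intro t ht y hy
      rw [hIoc] at ht
      have ht' : t ∈ Set.Icc (0:ℝ) 1 := Set.Ioc_subset_Icc_self ht
      have hy' : y ∈ Metric.closedBall x ε := Metric.ball_subset_closedBall hy
      have hL := hCmem t ht' y hy'
      have hC0 : (0:ℝ) ≤ C := le_trans (norm_nonneg _) (hCmem 0 (by norm_num) x hxball)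
      apply ContinuousLinearMap.opNorm_le_bound _ hC0
      intro z
      have hFz : F' y t z = (t * t) • (fderiv ℝ u (a + t • (y - a)) z) := by
        simp only [hF'def, ContinuousLinearMap.smul_apply, ContinuousLinearMap.coe_comp',
          Function.comp_apply, ContinuousLinearMap.coe_id', id_eq, _root_.map_smul, smul_smul]
      rw [hFz, norm_smul]
      have h1 : ‖fderiv ℝ u (a + t • (y - a)) z‖ ≤ C * ‖z‖ := by
        refine le_trans ((fderiv ℝ u (a + t • (y - a))).le_opNorm z) ?_
        exact mul_le_mul_of_nonneg_right hL (norm_nonneg z)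
      have ht0 : (0:ℝ) < t := ht.1
      have ht1 : t ≤ 1 := ht.2
      have : ‖t * t‖ ≤ 1 := by
        rw [Real.norm_eq_abs, abs_of_pos (by nlinarith)]
        nlinarith
      nlinarith [norm_nonneg (fderiv ℝ u (a + t • (y - a)) z), norm_nonneg z]
    · exact intervalIntegrable_const
    · refine Filter.Eventually.of_forall ?_
      intro t ht y hy
      rw [hIoc] at ht
      have ht' : t ∈ Set.Icc (0:ℝ) 1 := Set.Ioc_subset_Icc_self ht
      have hy' : y ∈ Metric.closedBall x ε := Metric.ball_subset_closedBall hy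
      have hz : a + t • (y - a) ∈ D := hsegB y hy' t ht'
      have hinner : HasFDerivAt (fun y : Fin 3 → ℝ => a + t • (y - a))
          (t • ContinuousLinearMap.id ℝ (Fin 3 → ℝ)) y :=
        (((hasFDerivAt_id y).sub_const a).const_smul t).const_add a
      exact ((hud _ hz).comp y hinner).const_smul t
  set G : (Fin 3 → ℝ) →L[ℝ] (Fin 3 → ℝ) := ∫ t in (0:ℝ)..1, F' x t with hGdef
  have hF'int : IntervalIntegrable (F' x) MeasureTheory.volume 0 1 :=
    ContinuousOn.intervalIntegrable (by rw [Set.uIcc_of_le zero_le_one]; exact hF'cont)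
  -- evaluation of G
  have hcint : ∀ (v : Fin 3 → ℝ), IntervalIntegrable
      (fun t : ℝ => (t * t) • fderiv ℝ u (a + t • (x - a)) v) MeasureTheory.volume 0 1 := by
    intro v
    apply ContinuousOn.intervalIntegrable
    rw [Set.uIcc_of_le zero_le_one]
    exact (continuousOn_id.mul continuousOn_id).smul (hcontf'.clm_apply continuousOn_const)
  have hM : ∀ (v : Fin 3 → ℝ) (i : Fin 3),
      G v i = ∫ t in (0:ℝ)..1, t ^ 2 * (fderiv ℝ u (a + t • (x - a)) v i) := by
    intro v i
    have h1 : G v = ∫ t in (0:ℝ)..1, (t * t) • fderiv ℝ u (a + t • (x - a)) v := by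
      rw [hGdef, ContinuousLinearMap.intervalIntegral_apply hF'int v]
      apply intervalIntegral.integral_congr
      intro t _
      simp only [hF'def, ContinuousLinearMap.smul_apply, ContinuousLinearMap.coe_comp',
        Function.comp_apply, ContinuousLinearMap.coe_id', id_eq, _root_.map_smul, smul_smul]
    have h2 : G v i = (ContinuousLinearMap.proj (R := ℝ) (φ := fun _ : Fin 3 => ℝ) i) (G v) := rfl
    rw [h2, h1, ← ContinuousLinearMap.intervalIntegral_comp_comm _ (hcint v)]
    apply intervalIntegral.integral_congr
    intro t _
    simp only [ContinuousLinearMap.proj_apply, Pi.smul_apply, smul_eq_mul]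
    ring
  -- derivative of components of g
  have hgi : ∀ i : Fin 3, HasFDerivAt (fun y => g y i)
      ((ContinuousLinearMap.proj (R := ℝ) (φ := fun _ : Fin 3 => ℝ) i).comp G) x := by
    intro i
    have h := (ContinuousLinearMap.proj (R := ℝ) (φ := fun _ : Fin 3 => ℝ) i).hasFDerivAt.comp x hG
    exact h
  -- partial derivatives of the products appearing in the curl
  have hcomb : ∀ i₁ k₁ i₂ k₂ j : Fin 3,
      pd3 (fun y => g y i₁ * (y k₁ - a k₁) - g y i₂ * (y k₂ - a k₂)) j x =
      (g x i₁ * ((Pi.single j 1 : Fin 3 → ℝ) k₁) + (x k₁ - a k₁) * G (Pi.single j 1) i₁) -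
      (g x i₂ * ((Pi.single j 1 : Fin 3 → ℝ) k₂) + (x k₂ - a k₂) * G (Pi.single j 1) i₂) := by
    intro i₁ k₁ i₂ k₂ j
    have hc : ∀ k : Fin 3, HasFDerivAt (fun y : Fin 3 → ℝ => y k - a k)
        (ContinuousLinearMap.proj (R := ℝ) (φ := fun _ : Fin 3 => ℝ) k) x := by
      intro k
      have h := ((ContinuousLinearMap.proj (R := ℝ) (φ := fun _ : Fin 3 => ℝ) k).hasFDerivAt
        (x := x)).sub_const (a k)
      exact h
    have h1 := ((hgi i₁).mul (hc k₁)).sub ((hgi i₂).mul (hc k₂))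
    have h1' : HasFDerivAt (fun y : Fin 3 → ℝ => g y i₁ * (y k₁ - a k₁) - g y i₂ * (y k₂ - a k₂)) _ x := h1
    rw [pd3, h1'.fderiv]
    simp [ContinuousLinearMap.sub_apply, ContinuousLinearMap.add_apply,
      ContinuousLinearMap.smul_apply, ContinuousLinearMap.proj_apply,
      ContinuousLinearMap.comp_apply, smul_eq_mul]
  -- fundamental theorem of calculus along the ray
  have hFTC : ∀ i : Fin 3, (∫ t in (0:ℝ)..1,
      (2 * t * u (a + t • (x - a)) i + t ^ 2 * (fderiv ℝ u (a + t • (x - a)) (x - a) i)))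
      = u x i := by
    intro i
    have hint : IntervalIntegrable (fun t : ℝ =>
        2 * t * u (a + t • (x - a)) i + t ^ 2 * (fderiv ℝ u (a + t • (x - a)) (x - a) i))
        MeasureTheory.volume 0 1 := by
      apply hci
      apply ContinuousOn.add
      · exact (continuousOn_const.mul continuousOn_id).mul (hcontui i)
      · exact hcontMij (x - a) i
    have hd : ∀ t ∈ Set.uIcc (0:ℝ) 1, HasDerivAt (fun t : ℝ => t ^ 2 * u (a + t • (x - a)) i)
        (2 * t * u (a + t • (x - a)) i + t ^ 2 * (fderiv ℝ u (a + t • (x - a)) (x - a) i)) t := by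
      intro t ht
      rw [Set.uIcc_of_le zero_le_one] at ht
      have hz : a + t • (x - a) ∈ D := hseg x hx t ht
      have h1 : HasDerivAt (fun t : ℝ => a + t • (x - a)) (x - a) t := by
        simpa using ((hasDerivAt_id t).smul_const (x - a)).const_add a
      have h2 : HasDerivAt (fun t : ℝ => u (a + t • (x - a)))
          (fderiv ℝ u (a + t • (x - a)) (x - a)) t := (hud _ hz).comp_hasDerivAt t h1
      have h3 : HasDerivAt (fun t : ℝ => u (a + t • (x - a)) i)
          (fderiv ℝ u (a + t • (x - a)) (x - a) i) t :=
        (ContinuousLinearMap.proj (R := ℝ) (φ := fun _ : Fin 3 => ℝ) i).hasFDerivAt.comp_hasDerivAt t h2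
      have h4 := (hasDerivAt_pow 2 t).mul h3
      exact h4.congr_deriv (by norm_num)
    have h := intervalIntegral.integral_eq_sub_of_hasDerivAt hd hint
    rw [h]
    norm_num
  -- split the FTC identity
  have hgix : ∀ i : Fin 3, g x i = ∫ t in (0:ℝ)..1, t * u (a + t • (x - a)) i := by
    intro i
    have : g x i = (ContinuousLinearMap.proj (R := ℝ) (φ := fun _ : Fin 3 => ℝ) i) (g x) := rfl
    rw [this, hgdef]
    rw [← ContinuousLinearMap.intervalIntegral_comp_comm _ hF_int]
    apply intervalIntegral.integral_congr
    intro t _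
    simp [ContinuousLinearMap.proj_apply, smul_eq_mul]
  have hsplit : ∀ i : Fin 3, u x i = 2 * g x i + G (x - a) i := by
    intro i
    rw [← hFTC i, intervalIntegral.integral_add, hM]
    · congr 1
      rw [hgix i, ← intervalIntegral.integral_const_mul]
      congr 1
      funext t
      ring
    · exact hci _ ((continuousOn_const.mul continuousOn_id).mul (hcontui i))
    · exact hci _ (hcontMij (x - a) i)
  -- decompose x - a
  have hxa : (x - a) = (x 0 - a 0) • (Pi.single 0 1 : Fin 3 → ℝ) +
      (x 1 - a 1) • (Pi.single 1 1 : Fin 3 → ℝ) + (x 2 - a 2) • (Pi.single 2 1 : Fin 3 → ℝ) := by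
    funext k
    fin_cases k <;> simp [Pi.single_apply]
  have hlin : ∀ i : Fin 3, G (x - a) i = (x 0 - a 0) * G (Pi.single 0 1) i +
      (x 1 - a 1) * G (Pi.single 1 1) i + (x 2 - a 2) * G (Pi.single 2 1) i := by
    intro i
    rw [hxa]
    simp [map_add, _root_.map_smul, smul_eq_mul]
  have hfin : ∀ i : Fin 3, u x i = 2 * g x i + (x 0 - a 0) * G (Pi.single 0 1) i +
      (x 1 - a 1) * G (Pi.single 1 1) i + (x 2 - a 2) * G (Pi.single 2 1) i := by
    intro i
    rw [hsplit i, hlin i]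
    ring
  -- trace of G vanishes by divergence-freeness
  have hcompd : ∀ z ∈ D, ∀ i : Fin 3, pd3 (fun y => u y i) i z = fderiv ℝ u z (Pi.single i 1) i := by
    intro z hz i
    have h := (ContinuousLinearMap.proj (R := ℝ) (φ := fun _ : Fin 3 => ℝ) i).hasFDerivAt.comp z (hud z hz)
    have h2 : HasFDerivAt (fun y => u y i)
        ((ContinuousLinearMap.proj (R := ℝ) (φ := fun _ : Fin 3 => ℝ) i).comp (fderiv ℝ u z)) z := h
    rw [pd3, h2.fderiv]
    rfl
  have htr : G (Pi.single 0 1) 0 + G (Pi.single 1 1) 1 + G (Pi.single 2 1) 2 = 0 := by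
    rw [hM, hM, hM, ← intervalIntegral.integral_add (hci _ (hcontMij _ 0)) (hci _ (hcontMij _ 1)),
      ← intervalIntegral.integral_add ((hci _ (hcontMij _ 0)).add (hci _ (hcontMij _ 1)))
        (hci _ (hcontMij _ 2))]
    refine (intervalIntegral.integral_congr (g := fun _ => (0:ℝ)) ?_).trans (by simp)
    intro t ht
    rw [Set.uIcc_of_le zero_le_one] at ht
    have hz : a + t • (x - a) ∈ D := hseg x hx t ht
    have hdv := hdiv _ hz
    rw [div3, Fin.sum_univ_three] at hdv
    rw [hcompd _ hz 0, hcompd _ hz 1, hcompd _ hz 2] at hdv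
    simp only [Pi.zero_apply]
    linear_combination (t ^ 2) * hdv
  -- rewrite the components of Rlift
  have e0 : (fun y => Rlift a u y 0) = fun y => g y 1 * (y 2 - a 2) - g y 2 * (y 1 - a 1) := by
    funext y
    simp [Rlift, cross3, hgdef, Pi.sub_apply]
  have e1 : (fun y => Rlift a u y 1) = fun y => g y 2 * (y 0 - a 0) - g y 0 * (y 2 - a 2) := by
    funext y
    simp [Rlift, cross3, hgdef, Pi.sub_apply]
  have e2 : (fun y => Rlift a u y 2) = fun y => g y 0 * (y 1 - a 1) - g y 1 * (y 0 - a 0) := by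
    funext y
    simp [Rlift, cross3, hgdef, Pi.sub_apply]
  -- final assembly
  funext i
  fin_cases i
  · show curl3 (Rlift a u) x 0 = u x 0
    rw [curl3]
    simp only [Matrix.cons_val_zero]
    rw [e2, e1, hcomb 0 1 1 0 1, hcomb 2 0 0 2 2]
    simp only [Pi.single_eq_same, Pi.single_eq_of_ne (by decide : (0:Fin 3) ≠ 1),
      Pi.single_eq_of_ne (by decide : (0:Fin 3) ≠ 2), Pi.single_eq_of_ne (by decide : (1:Fin 3) ≠ 0),
      Pi.single_eq_of_ne (by decide : (1:Fin 3) ≠ 2), Pi.single_eq_of_ne (by decide : (2:Fin 3) ≠ 0),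
      Pi.single_eq_of_ne (by decide : (2:Fin 3) ≠ 1)]
    linear_combination -hfin 0 - (x 0 - a 0) * htr
  · show curl3 (Rlift a u) x 1 = u x 1
    rw [curl3]
    simp only [Matrix.cons_val_one, Matrix.head_cons, Matrix.cons_val_zero]
    rw [e0, e2, hcomb 1 2 2 1 2, hcomb 0 1 1 0 0]
    simp only [Pi.single_eq_same, Pi.single_eq_of_ne (by decide : (0:Fin 3) ≠ 1),
      Pi.single_eq_of_ne (by decide : (0:Fin 3) ≠ 2), Pi.single_eq_of_ne (by decide : (1:Fin 3) ≠ 0),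
      Pi.single_eq_of_ne (by decide : (1:Fin 3) ≠ 2), Pi.single_eq_of_ne (by decide : (2:Fin 3) ≠ 0),
      Pi.single_eq_of_ne (by decide : (2:Fin 3) ≠ 1)]
    linear_combination -hfin 1 - (x 1 - a 1) * htr
  · show curl3 (Rlift a u) x 2 = u x 2
    rw [curl3]
    simp only [Matrix.cons_val_two, Matrix.tail_cons, Matrix.head_cons]
    rw [e1, e0, hcomb 2 0 0 2 0, hcomb 1 2 2 1 1]
    simp only [Pi.single_eq_same, Pi.single_eq_of_ne (by decide : (0:Fin 3) ≠ 1),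
      Pi.single_eq_of_ne (by decide : (0:Fin 3) ≠ 2), Pi.single_eq_of_ne (by decide : (1:Fin 3) ≠ 0),
      Pi.single_eq_of_ne (by decide : (1:Fin 3) ≠ 2), Pi.single_eq_of_ne (by decide : (2:Fin 3) ≠ 0),
      Pi.single_eq_of_ne (by decide : (2:Fin 3) ≠ 1)]
    linear_combination -hfin 2 - (x 2 - a 2) * htr
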